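/- Let B be a finite-dimensional unital C*-algebra with canonical trace τ, defined by τ(x) = Tr(L_x)/dim_ℂ(B) where L_x ∈ End_ℂ(B) is left multiplication by x. Let φ : B → B ⊗ M_k(ℂ) be a unital *-homomorphism satisfying the commuting square condition (τ ⊗ id)(φ(b)) = τ(b)·1_k for all b ∈ B. Write φ(b) = Σ_{ij} φ_{ij}(b) ⊗ E_{ij} with linear maps φ_{ij} : B → B, and let u_φ : B ⊗ ℂ^k → B ⊗ ℂ^k be the linear map u_φ(x ⊗ e_j) = Σ_i φ_{ij}(x) ⊗ e_i. Then u_φ is a bijection and preserves the sesquilinear form ⟨x ⊗ ξ, y ⊗ η⟩ = τ(x*y)·⟨ξ, η⟩ on B ⊗ ℂ^k; that is, u_φ is a unitary element of End_ℂ(B) ⊗ M_k(ℂ) with respect to the Hilbert space structure coming from the canonical trace. -/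

import Mathlib

open Matrix

/-- The canonical trace of a finite dimensional `ℂ`-algebra:
`τ(x) = Tr(L_x) / dim_ℂ(B)`, where `L_x` is left multiplication by `x`. -/
noncomputable def canonicalTrace (B : Type*) [NormedRing B] [NormedAlgebra ℂ B] (x : B) : ℂ :=
  LinearMap.trace ℂ B (LinearMap.mulLeft ℂ x) / (Module.finrank ℂ B : ℂ)

section Aux

/-- The canonical trace, bundled as a `ℂ`-linear map. -/
noncomputable def tauLin (B : Type*) [NormedRing B] [NormedAlgebra ℂ B] : B →ₗ[ℂ] ℂ where
  toFun := canonicalTrace B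
  map_add' a b := by
    have h : LinearMap.mulLeft ℂ (a + b) = LinearMap.mulLeft ℂ a + LinearMap.mulLeft ℂ b :=
      LinearMap.ext fun y => add_mul a b y
    simp [canonicalTrace, h, add_div]
  map_smul' c a := by
    have h : LinearMap.mulLeft ℂ (c • a) = c • LinearMap.mulLeft ℂ a :=
      LinearMap.ext fun y => smul_mul_assoc c a y
    simp [canonicalTrace, h, mul_div_assoc]

lemma canonicalTrace_eq_tauLin (B : Type*) [NormedRing B] [NormedAlgebra ℂ B] (x : B) :
    canonicalTrace B x = tauLin B x := rfl

set_option maxHeartbeats 1600000 in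
/-- Faithfulness/positivity of the canonical trace on a finite-dimensional C*-algebra. -/
lemma canonicalTrace_star_mul_self_exists
    {B : Type*} [NormedRing B] [StarRing B] [CStarRing B]
    [NormedAlgebra ℂ B] [StarModule ℂ B] [FiniteDimensional ℂ B] [Nontrivial B] (x : B) :
    ∃ r : ℝ, 0 ≤ r ∧ canonicalTrace B (star x * x) = (r : ℂ) ∧ (r = 0 → x = 0) := by
  haveI : CompleteSpace B := FiniteDimensional.complete ℂ B
  letI : CStarAlgebra B := { }
  set n := Module.finrank ℂ B with hn
  have hn0 : 0 < n := Module.finrank_pos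
  set p := star x * x with hpdef
  have hpsa : IsSelfAdjoint p := IsSelfAdjoint.star_mul_self x
  -- the complex spectrum of `p` is finite
  have hfinC : (spectrum ℂ p).Finite := by
    have h1 : Algebra.IsIntegral ℂ B := Algebra.IsIntegral.of_finite ℂ B
    have hq0 : minpoly ℂ p ≠ 0 := minpoly.ne_zero (Algebra.IsIntegral.isIntegral p)
    have hsub := spectrum.subset_polynomial_aeval p (minpoly ℂ p)
    rw [minpoly.aeval] at hsub
    have hsubset : spectrum ℂ p ⊆ (minpoly ℂ p).rootSet ℂ := by
      intro lam hlam
      have h2 : Polynomial.eval lam (minpoly ℂ p) ∈ spectrum ℂ (0 : B) :=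
        hsub ⟨lam, hlam, rfl⟩
      rw [spectrum.zero_eq] at h2
      rw [Polynomial.mem_rootSet_of_ne hq0]
      simpa [Polynomial.aeval_def] using h2
    exact Set.Finite.subset ((minpoly ℂ p).rootSet_finite ℂ) hsubset
  have hfinR : (spectrum ℝ p).Finite := by
    rw [← spectrum.preimage_algebraMap ℂ]
    exact hfinC.preimage (fun a _ b _ h => by exact_mod_cast h)
  have hnn : ∀ t ∈ spectrum ℝ p, 0 ≤ t := spectrum_star_mul_self_nonneg
  -- continuity is trivial on a finite (hence discrete) spectrum
  have hdisc : ∀ f : ℝ → ℝ, ContinuousOn f (spectrum ℝ p) := by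
    intro f
    haveI : Finite (spectrum ℝ p) := hfinR.to_subtype
    rw [continuousOn_iff_continuous_restrict]
    exact continuous_of_discreteTopology
  set S := hfinR.toFinset with hS
  set e : ℝ → B := fun lam => cfc (fun t : ℝ => if t = lam then (1 : ℝ) else 0) p with he
  set F : ℝ → ℝ → ℝ := fun lam t => lam • (if t = lam then (1 : ℝ) else 0) with hF
  -- spectral decomposition `p = ∑ λ • e λ`
  have hdecomp : p = ∑ lam ∈ S, lam • e lam := by
    conv_lhs => rw [← cfc_id ℝ p]
    have h1 : cfc (id : ℝ → ℝ) p = cfc (∑ lam ∈ S, F lam) p := by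
      apply cfc_congr
      intro t ht
      have htS : t ∈ S := hfinR.mem_toFinset.mpr ht
      simp only [Finset.sum_apply, hF, smul_eq_mul, mul_ite, mul_one, mul_zero, id]
      rw [Finset.sum_ite_eq S t (fun lam => lam)]
      simp [htS]
    rw [h1, cfc_sum F p S (fun i _ => hdisc _)]
    refine Finset.sum_congr rfl fun lam _ => ?_
    exact cfc_smul lam _ p (hdisc _)
  -- the trace of each spectral projection is a positive natural number over `n`
  have hτe : ∀ lam : ℝ, ∃ m : ℕ, lam ∈ S →
      (1 ≤ m ∧ canonicalTrace B (e lam) = (m : ℂ) / (n : ℂ)) := by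
    intro lam
    by_cases hlam : lam ∈ S
    · set f := fun t : ℝ => if t = lam then (1 : ℝ) else 0 with hf
      have hidem : e lam * e lam = e lam := by
        rw [he]
        simp only
        rw [← cfc_mul f f p (hdisc f) (hdisc f)]
        exact cfc_congr fun t _ => by by_cases h : t = lam <;> simp [hf, h]
      have hLidem : (LinearMap.mulLeft ℂ (e lam)) ∘ₗ (LinearMap.mulLeft ℂ (e lam))
          = LinearMap.mulLeft ℂ (e lam) := by
        rw [← LinearMap.mulLeft_mul, hidem]
      obtain ⟨V, hV⟩ := (LinearMap.isProj_iff_isIdempotentElem _).mpr hLidem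
      have htr : LinearMap.trace ℂ B (LinearMap.mulLeft ℂ (e lam)) = (Module.finrank ℂ V : ℂ) :=
        hV.trace
      refine ⟨Module.finrank ℂ V, fun _ => ⟨?_, ?_⟩⟩
      · have hne : e lam ≠ 0 := by
          intro h0
          have hspec : spectrum ℝ (e lam) = f '' spectrum ℝ p := cfc_map_spectrum (f := f) (a := p) hpsa (hdisc f)
          have h1mem : (1 : ℝ) ∈ spectrum ℝ (e lam) := by
            rw [hspec]
            exact ⟨lam, hfinR.mem_toFinset.mp hlam, by simp [hf]⟩
          rw [h0, spectrum.zero_eq] at h1mem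
          norm_num at h1mem
        rcases Nat.eq_zero_or_pos (Module.finrank ℂ V) with h | h
        · exfalso
          have hVbot : V = ⊥ := Submodule.finrank_eq_zero.mp h
          have hmem := hV.map_mem 1
          rw [hVbot, Submodule.mem_bot] at hmem
          simp only [LinearMap.mulLeft_apply, mul_one] at hmem
          exact hne hmem
        · exact h
      · rw [canonicalTrace, htr]
    · exact ⟨0, fun h => absurd h hlam⟩
  choose m hm using hτe
  refine ⟨∑ lam ∈ S, lam * (m lam) / n, ?_, ?_, ?_⟩
  · refine Finset.sum_nonneg fun lam hlam => ?_
    have h0 : 0 ≤ lam := hnn lam (hfinR.mem_toFinset.mp hlam)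
    positivity
  · rw [hpdef] at hdecomp ⊢
    rw [hdecomp, canonicalTrace_eq_tauLin, map_sum]
    push_cast
    refine Finset.sum_congr rfl fun lam hlam => ?_
    have hsmul : (lam • e lam) = (lam : ℂ) • e lam := (Complex.coe_smul lam (e lam)).symm
    rw [hsmul, _root_.map_smul, smul_eq_mul, ← canonicalTrace_eq_tauLin, (hm lam hlam).2]
    ring
  · intro hr0
    have hterm : ∀ lam ∈ S, lam * (m lam) / n = 0 := by
      refine (Finset.sum_eq_zero_iff_of_nonneg fun lam hlam => ?_).mp hr0
      have h0 : 0 ≤ lam := hnn lam (hfinR.mem_toFinset.mp hlam)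
      positivity
    have hσ0 : ∀ lam ∈ spectrum ℝ p, lam = 0 := by
      intro lam hlam
      have hlamS : lam ∈ S := hfinR.mem_toFinset.mpr hlam
      have h1 := hterm lam hlamS
      have h2 : (1 : ℕ) ≤ m lam := (hm lam hlamS).1
      have hn0' : (0:ℝ) < n := by exact_mod_cast hn0
      have hm0 : (0:ℝ) < (m lam : ℝ) := by exact_mod_cast h2
      rcases div_eq_zero_iff.mp h1 with h1' | h1'
      · rcases mul_eq_zero.mp h1' with h | h
        · exact h
        · exact absurd h (ne_of_gt hm0)
      · exact absurd h1' (ne_of_gt hn0')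
    -- hence the complex spectrum is {0} and so ‖p‖ = 0
    have hσC : ∀ z ∈ spectrum ℂ p, z = 0 := by
      intro z hz
      have hre : z = z.re := hpsa.mem_spectrum_eq_re hz
      have hmem : (z.re : ℝ) ∈ spectrum ℝ p := by
        rw [← spectrum.preimage_algebraMap ℂ]
        simpa [← hre] using hz
      rw [hre, hσ0 _ hmem]
      norm_num
    have hrad := hpsa.spectralRadius_eq_nnnorm
    have hrad0 : spectralRadius ℂ p = 0 := by
      rw [spectralRadius]
      refine le_antisymm (iSup₂_le fun k hk => ?_) zero_le
      simp [hσC k hk]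
    rw [hrad0] at hrad
    have hp0 : p = 0 := by
      have : ‖p‖₊ = 0 := by exact_mod_cast hrad.symm
      simpa using this
    rw [hpdef] at hp0
    exact (CStarRing.star_mul_self_eq_zero_iff x).mp hp0

end Aux

/-- Let `B` be a finite dimensional unital C*-algebra with canonical
trace `τ` and let `φ : B → B ⊗ M_k(ℂ)` (realized as `M_k(B)`) be a unital
`*`-homomorphism satisfying the commuting square condition
`(τ ⊗ id)(φ(b)) = τ(b)·1_k`. Then the associated linear map
`u_φ : B ⊗ ℂ^k → B ⊗ ℂ^k`, `(u_φ f) i = Σ_j φ_{ij}(f j)`, is a bijection preserving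
the sesquilinear form `⟨f, g⟩ = Σ_i τ((f i)* g i)`; i.e. `u_φ` is a unitary element
of `End_ℂ(B) ⊗ M_k(ℂ)` for the Hilbert structure of the canonical trace. -/
theorem u_phi_is_unitary
    (B : Type*) [NormedRing B] [StarRing B] [CStarRing B]
    [NormedAlgebra ℂ B] [StarModule ℂ B] [FiniteDimensional ℂ B]
    (k : ℕ) (φ : B →⋆ₐ[ℂ] Matrix (Fin k) (Fin k) B)
    -- the commuting square condition `(τ ⊗ id)(φ(b)) = τ(b)·1_k`
    (hcs : ∀ b : B, ∀ i j : Fin k,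
        canonicalTrace B (φ b i j) = canonicalTrace B b * (if i = j then 1 else 0))
    (uφ : (Fin k → B) → (Fin k → B))
    (huφ : ∀ (f : Fin k → B) (i : Fin k), uφ f i = ∑ j, φ (f j) i j) :
    Function.Bijective uφ ∧
    ∀ f g : Fin k → B,
      ∑ i, canonicalTrace B (star (uφ f i) * uφ g i)
        = ∑ i, canonicalTrace B (star (f i) * g i) := by
  -- first, the preservation of the sesquilinear form
  have hpres : ∀ f g : Fin k → B,
      ∑ i, canonicalTrace B (star (uφ f i) * uφ g i)
        = ∑ i, canonicalTrace B (star (f i) * g i) := by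
    intro f g
    have hstep : ∀ i, canonicalTrace B (star (uφ f i) * uφ g i)
        = ∑ j, ∑ l, canonicalTrace B ((φ (star (f j))) j i * (φ (g l)) i l) := by
      intro i
      rw [huφ f i, huφ g i, star_sum, Finset.sum_mul_sum]
      rw [canonicalTrace_eq_tauLin, map_sum]
      refine Finset.sum_congr rfl fun j _ => ?_
      rw [map_sum]
      refine Finset.sum_congr rfl fun l _ => ?_
      rw [← canonicalTrace_eq_tauLin]
      congr 1
      have : star (φ (f j) i j) = (star (φ (f j))) j i := by rw [Matrix.star_apply]
      rw [this, map_star]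
    calc ∑ i, canonicalTrace B (star (uφ f i) * uφ g i)
        = ∑ i, ∑ j, ∑ l, canonicalTrace B ((φ (star (f j))) j i * (φ (g l)) i l) :=
          Finset.sum_congr rfl fun i _ => hstep i
      _ = ∑ j, ∑ l, ∑ i, canonicalTrace B ((φ (star (f j))) j i * (φ (g l)) i l) := by
          rw [Finset.sum_comm]
          exact Finset.sum_congr rfl fun j _ => Finset.sum_comm
      _ = ∑ j, ∑ l, canonicalTrace B (star (f j) * g l) * (if j = l then 1 else 0) := by
          refine Finset.sum_congr rfl fun j _ => Finset.sum_congr rfl fun l _ => ?_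
          have h1 : ∑ i, canonicalTrace B ((φ (star (f j))) j i * (φ (g l)) i l)
              = canonicalTrace B ((φ (star (f j)) * φ (g l)) j l) := by
            rw [Matrix.mul_apply, canonicalTrace_eq_tauLin, map_sum]
            exact Finset.sum_congr rfl fun i _ => rfl
          rw [h1, ← _root_.map_mul, hcs]
      _ = ∑ i, canonicalTrace B (star (f i) * g i) := by
          refine Finset.sum_congr rfl fun j _ => ?_
          simp [mul_ite, mul_one, mul_zero]
  refine ⟨?_, hpres⟩
  -- bijectivity
  rcases subsingleton_or_nontrivial B with hB | hB
  · haveI : Subsingleton (Fin k → B) := ⟨fun a b => funext fun i => Subsingleton.elim _ _⟩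
    exact ⟨fun a b _ => Subsingleton.elim a b, fun y => ⟨y, Subsingleton.elim _ _⟩⟩
  · -- bundle `uφ` as a linear map
    set U : (Fin k → B) →ₗ[ℂ] (Fin k → B) :=
      { toFun := fun f i => ∑ j, φ (f j) i j
        map_add' := by
          intro f g
          funext i
          simp [map_add, Matrix.add_apply, Finset.sum_add_distrib]
        map_smul' := by
          intro c f
          funext i
          simp [_root_.map_smul, Matrix.smul_apply, Finset.smul_sum] } with hUdef
    have hU : uφ = U := funext fun f => funext fun i => huφ f i
    rw [hU]
    have hinj : Function.Injective U := by
      rw [← LinearMap.ker_eq_bot]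
      rw [LinearMap.ker_eq_bot']
      intro f hf
      have h0 : ∑ i, canonicalTrace B (star (f i) * f i) = 0 := by
        rw [← hpres f f, hU, hf]
        simp [canonicalTrace]
      choose r hr0 hre hrz using fun i => canonicalTrace_star_mul_self_exists (f i)
      have h1 : ∑ i, (r i : ℂ) = 0 := by
        rw [← h0]
        exact Finset.sum_congr rfl fun i _ => (hre i).symm
      have h2 : ∑ i, r i = 0 := by exact_mod_cast h1
      have h3 : ∀ i ∈ Finset.univ, r i = 0 :=
        (Finset.sum_eq_zero_iff_of_nonneg fun i _ => hr0 i).mp h2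
      funext i
      exact hrz i (h3 i (Finset.mem_univ i))
    exact ⟨hinj, (LinearMap.injective_iff_surjective).mp hinj⟩
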